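/- By the concavity of σ_k^{1/k}, if λ ∈ Γ₊ and (b_{ij;1}) is any symmetric matrix diagonal in the eigenbasis with diagonal entries b_{ii;1}, then −Σ_{i≠j} σ_{k-2}(λ|ij)·b_{ii;1}·b_{jj;1} ≥ −((k−1)/k)·(Σᵢ σ_{k-1}(λ|i) b_{ii;1})²/σ_k(λ). Equivalently: for λ ∈ Γ₊ and any vector μ ∈ ℝⁿ, Σ_{i≠j} σ_{k-2}(λ|ij) μᵢμⱼ ≤ ((k−1)/k)·(Σᵢ σ_{k-1}(λ|i) μᵢ)² / σ_k(λ). -/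

import Mathlib

/-- The k-th elementary symmetric polynomial of `lam : Fin n → ℝ`. -/
noncomputable def sigmaE (n k : ℕ) (lam : Fin n → ℝ) : ℝ :=
  ∑ s ∈ Finset.powersetCard k (Finset.univ : Finset (Fin n)), ∏ i ∈ s, lam i

/-- The (k-1)-th elementary symmetric polynomial of the variables with `lam i` deleted,
`σ_{k-1}(λ|i) = ∂σ_k/∂λ_i`. -/
noncomputable def sigmaE1 (n k : ℕ) (lam : Fin n → ℝ) (i : Fin n) : ℝ :=
  ∑ s ∈ Finset.powersetCard k ((Finset.univ : Finset (Fin n)).erase i), ∏ j ∈ s, lam j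

/-- `σ_{k-2}(λ|ij) = ∂²σ_k/∂λ_i∂λ_j` (for `i ≠ j`): the sum over subsets avoiding `i, j`
whose cardinality plus 2 equals `k` (so it vanishes when `k < 2`). -/
noncomputable def sigmaE2 (n k : ℕ) (lam : Fin n → ℝ) (i j : Fin n) : ℝ :=
  ∑ s ∈ (((Finset.univ : Finset (Fin n)).erase i).erase j).powerset.filter
      (fun s => s.card + 2 = k), ∏ m ∈ s, lam m

open Polynomial Finset

namespace Stmt13Aux

variable {n : ℕ}

lemma multiset_im_sum (m : Multiset ℂ) : m.sum.im = (m.map Complex.im).sum := by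
  induction m using Multiset.induction_on with
  | empty => simp
  | cons a s ih => simp [ih]

lemma multiset_sum_neg (m : Multiset ℝ) (hm : m ≠ 0) (h : ∀ x ∈ m, x < 0) : m.sum < 0 := by
  induction m using Multiset.induction_on with
  | empty => simp at hm
  | cons a s ih =>
      rcases eq_or_ne s 0 with rfl | hs
      · simpa using h a (by simp)
      · have := ih hs (fun x hx => h x (by simp [hx]))
        have ha := h a (by simp)
        simp only [Multiset.sum_cons]
        linarith

lemma derivative_multiset_prod (m : Multiset ℂ) :
    derivative (m.map (fun r => X - C r)).prod
      = (m.map (fun r => ((m.erase r).map (fun t => X - C t)).prod)).sum := by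
  induction m using Multiset.induction_on with
  | empty => simp
  | cons a s ih =>
      rw [Multiset.map_cons, Multiset.prod_cons, derivative_mul, ih]
      rw [Multiset.map_cons, Multiset.sum_cons, Multiset.erase_cons_head]
      have h2 : (s.map fun r => ((a ::ₘ s).erase r |>.map (fun t => X - C t)).prod)
          = s.map fun r => (X - C a) * ((s.erase r).map (fun t => X - C t)).prod := by
        refine Multiset.map_congr rfl (fun r hr => ?_)
        have : (a ::ₘ s).erase r = a ::ₘ s.erase r := by
          rcases eq_or_ne r a with rfl | hra
          · rw [Multiset.erase_cons_head, Multiset.cons_erase hr]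
          · exact Multiset.erase_cons_tail_of_mem hr
        rw [this, Multiset.map_cons, Multiset.prod_cons]
      rw [h2, Multiset.sum_map_mul_left]
      simp [add_comm]


lemma gauss_lucas_step (q : ℂ[X]) (hq : 0 < q.natDegree)
    (h : ∀ w : ℂ, 0 ≤ w.im → q.eval w ≠ 0) :
    ∀ w : ℂ, 0 ≤ w.im → (derivative q).eval w ≠ 0 := by
  have hq0 : q ≠ 0 := fun h0 => h 0 (by simp) (by simp [h0])
  have hsplit : Splits q := IsAlgClosed.splits q
  have hcard : Multiset.card q.roots = q.natDegree := (splits_iff_card_roots).mp hsplit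
  have him : ∀ r ∈ q.roots, r.im < 0 := by
    intro r hr
    by_contra hge
    exact h r (le_of_not_gt hge) ((mem_roots hq0).mp hr)
  intro w hw
  have hwr : ∀ r ∈ q.roots, w - r ≠ 0 := by
    intro r hr h0
    have : (w - r).im = 0 := by rw [h0]; simp
    have := him r hr
    simp only [Complex.sub_im] at *
    linarith
  have hqfac := hsplit.eq_prod_roots
  have hder : derivative q = C q.leadingCoeff *
      (q.roots.map (fun r => ((q.roots.erase r).map (fun t => X - C t)).prod)).sum := by
    conv_lhs => rw [hqfac]
    rw [derivative_C_mul, derivative_multiset_prod]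
  have heval : (derivative q).eval w = q.leadingCoeff *
      ((q.roots.map (fun t => w - t)).prod *
        (q.roots.map (fun r => (w - r)⁻¹)).sum) := by
    rw [hder, eval_mul, eval_C]
    congr 1
    have hsum0 := map_multiset_sum (Polynomial.evalRingHom w) (Multiset.map (fun r => (Multiset.map (fun t => X - C t) (q.roots.erase r)).prod) q.roots)
    simp only [Polynomial.coe_evalRingHom] at hsum0
    rw [hsum0, Multiset.map_map, ← Multiset.sum_map_mul_left]
    refine congrArg _ (Multiset.map_congr rfl (fun r hr => ?_))
    simp only [Function.comp_apply, eval_multiset_prod, Multiset.map_map]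
    have : ((q.roots.erase r).map (fun t => eval w (X - C t))).prod
        = ((q.roots.erase r).map (fun t => w - t)).prod := by
      refine congrArg _ (Multiset.map_congr rfl (fun t _ => by simp))
    rw [this]
    have hmem := Multiset.prod_map_erase (f := fun t => w - t) hr
    field_simp
    rw [← hmem, mul_comm ((fun t => w - t) r), mul_div_cancel_right₀ _ (hwr r hr)]
  rw [heval]
  have hlc : q.leadingCoeff ≠ 0 := leadingCoeff_ne_zero.mpr hq0
  have hprod : (q.roots.map (fun t => w - t)).prod ≠ 0 := by
    apply Multiset.prod_ne_zero
    intro h0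
    rcases Multiset.mem_map.mp h0 with ⟨t, ht, ht0⟩
    exact hwr t ht ht0
  have hsum : (q.roots.map (fun r => (w - r)⁻¹)).sum ≠ 0 := by
    intro h0
    have him0 : ((q.roots.map (fun r => (w - r)⁻¹)).map Complex.im).sum < 0 := by
      apply multiset_sum_neg
      · intro hmapz
        have : q.roots = 0 := by
          simpa using congrArg Multiset.card hmapz
        rw [this] at hcard
        simp at hcard
        omega
      · intro x hx
        rcases Multiset.mem_map.mp hx with ⟨y, hy, rfl⟩
        rcases Multiset.mem_map.mp hy with ⟨r, hr, rfl⟩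
        rw [Complex.inv_im]
        have h1 : 0 < (w - r).im := by
          have := him r hr; simp only [Complex.sub_im]; linarith
        have h2 : 0 < Complex.normSq (w - r) := by
          rw [Complex.normSq_pos]; exact hwr r hr
        exact div_neg_of_neg_of_pos (by linarith) h2
    rw [← multiset_im_sum, h0] at him0
    simp at him0
  exact mul_ne_zero hlc (mul_ne_zero hprod hsum)

lemma iter_deriv_natDegree (n : ℕ) (z : Fin n → ℂ) (j : ℕ) (hj : j ≤ n) :
    (derivative^[j] (∏ i, (X + C (z i)))).natDegree = n - j := by
  set P : ℂ[X] := ∏ i, (X + C (z i)) with hP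
  have hmonic : P.Monic := monic_prod_of_monic _ _ (fun i _ => monic_X_add_C (z i))
  have hdeg : P.natDegree = n := by
    rw [hP, natDegree_prod _ _ (fun i _ => (monic_X_add_C (z i)).ne_zero)]
    simp [natDegree_X_add_C]
  have hle : (derivative^[j] P).natDegree ≤ n - j := by
    simpa [hdeg] using natDegree_iterate_derivative P j
  have hcoeff : (derivative^[j] P).coeff (n - j) ≠ 0 := by
    rw [coeff_iterate_derivative]
    have : n - j + j = n := Nat.sub_add_cancel hj
    rw [this]
    have : P.coeff n = 1 := by
      rw [← hdeg]; exact hmonic.coeff_natDegree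
    rw [this]
    have hd : n.descFactorial j ≠ 0 := fun h0 => (by omega : ¬ n < j) (Nat.descFactorial_eq_zero_iff_lt.mp h0)
    simp [nsmul_eq_mul, hd]
  exact le_antisymm hle (le_natDegree_of_ne_zero hcoeff)


lemma iter_deriv_ne_zero (n : ℕ) (z : Fin n → ℂ) (hz : ∀ i, 0 < (z i).im) :
    ∀ j, j ≤ n → ∀ w : ℂ, 0 ≤ w.im → (derivative^[j] (∏ i, (X + C (z i)))).eval w ≠ 0 := by
  intro j
  induction j with
  | zero =>
      intro _ w hw
      simp only [Function.iterate_zero_apply, eval_prod, eval_add, eval_X, eval_C]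
      apply Finset.prod_ne_zero_iff.mpr
      intro i _
      intro h0
      have : (w + z i).im = 0 := by rw [h0]; simp
      rw [Complex.add_im] at this
      have := hz i
      linarith
  | succ j ih =>
      intro hj w hw
      rw [Function.iterate_succ_apply']
      refine gauss_lucas_step _ ?_ (ih (by omega)) w hw
      rw [iter_deriv_natDegree n z j (by omega)]
      omega

lemma esymm_ne_zero (n k : ℕ) (hk1 : 1 ≤ k) (hkn : k ≤ n) (z : Fin n → ℂ)
    (hz : ∀ i, 0 < (z i).im) :
    (∑ S ∈ Finset.powersetCard k (Finset.univ : Finset (Fin n)), ∏ i ∈ S, z i) ≠ 0 := by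
  set P : ℂ[X] := ∏ i, (X + C (z i)) with hP
  have hcard : (Finset.univ : Finset (Fin n)).card = n := by simp
  have hcoeff : P.coeff (n - k) = ∑ S ∈ Finset.powersetCard k (Finset.univ : Finset (Fin n)), ∏ i ∈ S, z i := by
    rw [hP, Finset.prod_X_add_C_coeff _ _ (by omega)]
    rw [hcard, Nat.sub_sub_self hkn]
  have heval := iter_deriv_ne_zero n z hz (n - k) (by omega) 0 (by simp)
  rw [← coeff_zero_eq_eval_zero, coeff_iterate_derivative] at heval
  simp only [Nat.zero_add] at heval
  intro h0
  rw [← hcoeff] at h0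
  rw [h0] at heval
  simp at heval


lemma coeff_g (n k j : ℕ) (hj : j ≤ k) (lam μ : Fin n → ℝ) :
    (∑ S ∈ Finset.powersetCard k (Finset.univ : Finset (Fin n)),
        ∏ i ∈ S, (C (μ i) + C (lam i) * X)).coeff j
      = ∑ T ∈ Finset.powersetCard j (Finset.univ : Finset (Fin n)),
          (∏ i ∈ T, lam i) *
            ∑ U ∈ Finset.powersetCard (k - j) ((Finset.univ : Finset (Fin n)) \ T),
              ∏ i ∈ U, μ i := by
  rw [finset_sum_coeff]
  have hprod : ∀ S : Finset (Fin n), S.card = k →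
      (∏ i ∈ S, (C (μ i) + C (lam i) * X)).coeff j
        = ∑ t ∈ S.powersetCard j, (∏ i ∈ t, lam i) * ∏ i ∈ S \ t, μ i := by
    intro S hS
    have h1 : (∏ i ∈ S, (C (μ i) + C (lam i) * X))
        = ∑ t ∈ S.powerset, Polynomial.C ((∏ i ∈ t, lam i) * ∏ i ∈ S \ t, μ i) * X ^ t.card := by
      have : ∀ i ∈ S, (C (μ i) + C (lam i) * X) = (C (lam i) * X) + C (μ i) := by
        intro i _; ring
      rw [Finset.prod_congr rfl this, Finset.prod_add]
      refine Finset.sum_congr rfl (fun t _ => ?_)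
      rw [Finset.prod_mul_distrib, Finset.prod_const, ← map_prod, ← map_prod]
      rw [map_mul]
      ring
    rw [h1, finset_sum_coeff]
    simp only [coeff_C_mul, coeff_X_pow]
    rw [powersetCard_eq_filter, Finset.sum_filter]
    refine Finset.sum_congr rfl (fun t _ => ?_)
    by_cases h : t.card = j
    · simp [h]
    · simp [h, show j ≠ #t from fun hh => h hh.symm]
  calc (∑ S ∈ Finset.powersetCard k (Finset.univ : Finset (Fin n)),
        (∏ i ∈ S, (C (μ i) + C (lam i) * X)).coeff j)
      = ∑ S ∈ Finset.powersetCard k (Finset.univ : Finset (Fin n)),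
          ∑ t ∈ Finset.powersetCard j (Finset.univ : Finset (Fin n)),
            (if t ⊆ S then (∏ i ∈ t, lam i) * ∏ i ∈ S \ t, μ i else 0) := by
        refine Finset.sum_congr rfl (fun S hS => ?_)
        rw [hprod S (Finset.mem_powersetCard.mp hS).2]
        rw [← Finset.sum_filter]
        refine (Finset.sum_congr ?_ (fun _ _ => rfl)).symm
        ext t
        simp only [Finset.mem_filter, Finset.mem_powersetCard]
        constructor
        · rintro ⟨⟨_, hc⟩, hsub⟩; exact ⟨hsub, hc⟩
        · rintro ⟨hsub, hc⟩; exact ⟨⟨Finset.subset_univ t, hc⟩, hsub⟩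
    _ = ∑ t ∈ Finset.powersetCard j (Finset.univ : Finset (Fin n)),
          ∑ S ∈ (Finset.powersetCard k (Finset.univ : Finset (Fin n))).filter (fun S => t ⊆ S),
            (∏ i ∈ t, lam i) * ∏ i ∈ S \ t, μ i := by
        rw [Finset.sum_comm]
        refine Finset.sum_congr rfl (fun t _ => ?_)
        rw [Finset.sum_filter]
    _ = _ := by
        refine Finset.sum_congr rfl (fun t ht => ?_)
        rw [Finset.mul_sum]
        rcases Finset.mem_powersetCard.mp ht with ⟨-, htc⟩
        refine Finset.sum_nbij' (fun S => S \ t) (fun U => t ∪ U) ?_ ?_ ?_ ?_ ?_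
        · intro S hS
          rcases Finset.mem_filter.mp hS with ⟨hSk, hts⟩
          rcases Finset.mem_powersetCard.mp hSk with ⟨-, hSc⟩
          refine Finset.mem_powersetCard.mpr ⟨?_, ?_⟩
          · exact Finset.sdiff_subset_sdiff (Finset.subset_univ S) (le_refl _)
          · rw [Finset.card_sdiff_of_subset hts, hSc, htc]
        · intro U hU
          rcases Finset.mem_powersetCard.mp hU with ⟨hUsub, hUc⟩
          rcases Finset.subset_sdiff.mp hUsub with ⟨-, hdisj⟩
          refine Finset.mem_filter.mpr ⟨Finset.mem_powersetCard.mpr ⟨Finset.subset_univ _, ?_⟩,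
            Finset.subset_union_left⟩
          rw [Finset.card_union_of_disjoint hdisj.symm, htc, hUc]
          omega
        · intro S hS
          exact Finset.union_sdiff_of_subset (Finset.mem_filter.mp hS).2
        · intro U hU
          rcases Finset.mem_powersetCard.mp hU with ⟨hUsub, -⟩
          rcases Finset.subset_sdiff.mp hUsub with ⟨-, hdisj⟩
          exact Finset.union_sdiff_cancel_left hdisj.symm
        · intro S hS
          rfl

lemma sum_powersetCard_one (s : Finset (Fin n)) (f : Fin n → ℝ) :
    ∑ U ∈ s.powersetCard 1, ∏ i ∈ U, f i = ∑ i ∈ s, f i := by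
  rw [Finset.powersetCard_one, Finset.sum_map]
  simp

lemma pairs_sum (s : Finset (Fin n)) (f : Fin n → ℝ) :
    ∑ i ∈ s, ∑ j ∈ s.erase i, f i * f j = (∑ i ∈ s, f i)^2 - ∑ i ∈ s, f i^2 := by
  have h : ∀ i ∈ s, ∑ j ∈ s.erase i, f i * f j = f i * (∑ j ∈ s, f j) - f i^2 := by
    intro i hi
    rw [← Finset.mul_sum, Finset.sum_erase_eq_sub hi]
    ring
  rw [Finset.sum_congr rfl h, Finset.sum_sub_distrib, ← Finset.sum_mul]
  ring

lemma two_mul_E2 (s : Finset (Fin n)) (f : Fin n → ℝ) :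
    2 * ∑ U ∈ s.powersetCard 2, ∏ i ∈ U, f i = (∑ i ∈ s, f i)^2 - ∑ i ∈ s, f i^2 := by
  induction s using Finset.induction_on with
  | empty => rw [Finset.powersetCard_eq_empty.mpr (by simp)]; simp
  | insert _ _ ha ih =>
      rename_i a s
      rw [Finset.powersetCard_succ_insert ha, Finset.sum_union, Finset.sum_image]
      · have h1 : ∑ U ∈ s.powersetCard 1, ∏ i ∈ insert a U, f i
            = f a * ∑ i ∈ s, f i := by
          rw [← sum_powersetCard_one s f, Finset.mul_sum]
          refine Finset.sum_congr rfl (fun U hU => ?_)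
          rcases Finset.mem_powersetCard.mp hU with ⟨hUs, -⟩
          rw [Finset.prod_insert (fun haU => ha (hUs haU))]
        rw [h1, Finset.sum_insert ha, Finset.sum_insert ha]
        ring_nf
        nlinarith [ih]
      · intro U hU V hV hUV
        rcases Finset.mem_powersetCard.mp hU with ⟨hUs, -⟩
        rcases Finset.mem_powersetCard.mp hV with ⟨hVs, -⟩
        have : (insert a U).erase a = (insert a V).erase a := by rw [hUV]
        rwa [Finset.erase_insert (fun h => ha (hUs h)),
          Finset.erase_insert (fun h => ha (hVs h))] at this
      · rw [Finset.disjoint_left]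
        intro U hU hU2
        rcases Finset.mem_powersetCard.mp hU with ⟨hUs, -⟩
        rcases Finset.mem_image.mp hU2 with ⟨V, -, rfl⟩
        exact ha (hUs (Finset.mem_insert_self a V))


variable {n k : ℕ} (lam μ : Fin n → ℝ)

noncomputable def gpoly (n k : ℕ) (lam μ : Fin n → ℝ) : Polynomial ℝ :=
  ∑ S ∈ Finset.powersetCard k (Finset.univ : Finset (Fin n)),
    ∏ i ∈ S, (C (μ i) + C (lam i) * X)

lemma gpoly_coeff_k (hkn : k ≤ n) : (gpoly n k lam μ).coeff k = sigmaE n k lam := by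
  rw [gpoly, coeff_g n k k (le_refl k), sigmaE]
  refine Finset.sum_congr rfl (fun T _ => ?_)
  rw [Nat.sub_self, Finset.powersetCard_zero]
  simp

lemma gpoly_coeff_k1 (hk1 : 1 ≤ k) :
    (gpoly n k lam μ).coeff (k - 1) = ∑ i, sigmaE1 n (k-1) lam i * μ i := by
  rw [gpoly, coeff_g n k (k-1) (by omega)]
  have hsub : k - (k - 1) = 1 := by omega
  rw [hsub]
  have hE1 : ∀ i : Fin n, sigmaE1 n (k-1) lam i
      = ∑ T ∈ Finset.powersetCard (k-1) (Finset.univ : Finset (Fin n)),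
          (if i ∉ T then ∏ m ∈ T, lam m else 0) := by
    intro i
    rw [sigmaE1, ← Finset.sum_filter]
    refine Finset.sum_congr ?_ (fun _ _ => rfl)
    ext T
    simp only [Finset.mem_powersetCard, Finset.mem_filter, Finset.subset_erase,
      Finset.subset_univ, true_and]
    tauto
  calc ∑ T ∈ Finset.powersetCard (k-1) (Finset.univ : Finset (Fin n)),
        (∏ i ∈ T, lam i) * ∑ U ∈ Finset.powersetCard 1 ((Finset.univ : Finset (Fin n)) \ T), ∏ i ∈ U, μ i
      = ∑ T ∈ Finset.powersetCard (k-1) (Finset.univ : Finset (Fin n)),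
          ∑ i : Fin n, (if i ∉ T then ∏ m ∈ T, lam m else 0) * μ i := by
        refine Finset.sum_congr rfl (fun T _ => ?_)
        rw [sum_powersetCard_one, Finset.mul_sum]
        rw [show (Finset.univ : Finset (Fin n)) \ T = Finset.univ.filter (fun i => i ∉ T) from
          Finset.sdiff_eq_filter _ _, Finset.sum_filter]
        refine Finset.sum_congr rfl (fun i _ => ?_)
        by_cases h : i ∈ T <;> simp [h]
    _ = ∑ i, sigmaE1 n (k-1) lam i * μ i := by
        rw [Finset.sum_comm]
        refine Finset.sum_congr rfl (fun i _ => ?_)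
        rw [hE1, Finset.sum_mul]

lemma sigmaE2_eq (hk2 : 2 ≤ k) (i j : Fin n) :
    sigmaE2 n k lam i j
      = ∑ T ∈ Finset.powersetCard (k-2) (Finset.univ : Finset (Fin n)),
          (if i ∉ T ∧ j ∉ T then ∏ m ∈ T, lam m else 0) := by
  rw [sigmaE2, ← Finset.sum_filter]
  refine Finset.sum_congr ?_ (fun _ _ => rfl)
  ext T
  constructor
  · intro hT
    rw [Finset.mem_filter, Finset.mem_powerset] at hT
    obtain ⟨hsub', hc⟩ := hT
    rw [Finset.subset_erase] at hsub'
    obtain ⟨hsub'', hj⟩ := hsub'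
    rw [Finset.subset_erase] at hsub''
    obtain ⟨-, hi⟩ := hsub''
    rw [Finset.mem_filter, Finset.mem_powersetCard]
    exact ⟨⟨Finset.subset_univ _, by omega⟩, hi, hj⟩
  · intro hT
    rw [Finset.mem_filter, Finset.mem_powersetCard] at hT
    obtain ⟨⟨-, hc⟩, hi, hj⟩ := hT
    rw [Finset.mem_filter, Finset.mem_powerset, Finset.subset_erase, Finset.subset_erase]
    exact ⟨⟨⟨Finset.subset_univ _, hi⟩, hj⟩, by omega⟩

lemma gpoly_coeff_k2 (hk2 : 2 ≤ k) :
    2 * (gpoly n k lam μ).coeff (k - 2)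
      = ∑ i, ∑ j ∈ Finset.univ.erase i, sigmaE2 n k lam i j * μ i * μ j := by
  rw [gpoly, coeff_g n k (k-2) (by omega)]
  have hsub : k - (k - 2) = 2 := by omega
  rw [hsub]
  rw [Finset.mul_sum]
  calc ∑ T ∈ Finset.powersetCard (k-2) (Finset.univ : Finset (Fin n)),
        2 * ((∏ i ∈ T, lam i) * ∑ U ∈ Finset.powersetCard 2 ((Finset.univ : Finset (Fin n)) \ T), ∏ i ∈ U, μ i)
      = ∑ T ∈ Finset.powersetCard (k-2) (Finset.univ : Finset (Fin n)),
          (∏ m ∈ T, lam m) *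
            ∑ i ∈ (Finset.univ : Finset (Fin n)) \ T, ∑ j ∈ ((Finset.univ : Finset (Fin n)) \ T).erase i, μ i * μ j := by
        refine Finset.sum_congr rfl (fun T _ => ?_)
        rw [pairs_sum, ← two_mul_E2]
        ring
    _ = ∑ T ∈ Finset.powersetCard (k-2) (Finset.univ : Finset (Fin n)),
          ∑ i : Fin n, ∑ j ∈ Finset.univ.erase i,
            (if i ∉ T ∧ j ∉ T then ∏ m ∈ T, lam m else 0) * μ i * μ j := by
        refine Finset.sum_congr rfl (fun T _ => ?_)
        rw [Finset.mul_sum]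
        rw [show (Finset.univ : Finset (Fin n)) \ T = Finset.univ.filter (fun i => i ∉ T) from
          Finset.sdiff_eq_filter _ _]
        rw [Finset.sum_filter]
        refine Finset.sum_congr rfl (fun i _ => ?_)
        by_cases hi : i ∈ T
        · simp only [hi, not_true_eq_false, if_false, false_and]
          simp
        · simp only [hi, not_false_eq_true, if_true, true_and, Finset.mul_sum]
          rw [show (Finset.univ.filter (fun i => i ∉ T)).erase i
              = (Finset.univ.erase i).filter (fun j => j ∉ T) by ext x; simp; try tauto]
          rw [Finset.sum_filter]
          refine Finset.sum_congr rfl (fun j _ => ?_)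
          by_cases hj : j ∈ T <;> simp [hj] <;> ring
    _ = ∑ i, ∑ j ∈ Finset.univ.erase i, sigmaE2 n k lam i j * μ i * μ j := by
        rw [Finset.sum_comm]
        refine Finset.sum_congr rfl (fun i _ => ?_)
        rw [Finset.sum_comm]
        refine Finset.sum_congr rfl (fun j _ => ?_)
        rw [sigmaE2_eq lam hk2, Finset.sum_mul, Finset.sum_mul]


lemma esymm_map_hom {R S : Type*} [CommRing R] [CommRing S] (f : R →+* S) (m : Multiset R)
    (j : ℕ) : (m.map f).esymm j = f (m.esymm j) := by
  rw [Multiset.esymm, Multiset.esymm, Multiset.powersetCard_map, Multiset.map_map,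
    map_multiset_sum, Multiset.map_map]
  refine congrArg _ (Multiset.map_congr rfl (fun t _ => ?_))
  simp [Multiset.prod_hom t f]

lemma esymm_one' {R : Type*} [CommRing R] (m : Multiset R) : m.esymm 1 = m.sum := by
  rw [Multiset.esymm, Multiset.powersetCard_one, Multiset.map_map]
  simp

lemma esymm_two_newton (m : Multiset ℝ) :
    m.sum ^ 2 = (m.map (fun x => x^2)).sum + 2 * m.esymm 2 := by
  induction m using Multiset.induction_on with
  | empty => simp [Multiset.esymm, Multiset.powersetCard_zero_right 1]
  | cons a s ih =>
      have hcons : (a ::ₘ s).esymm 2 = s.esymm 2 + a * s.esymm 1 := by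
        rw [Multiset.esymm, Multiset.powersetCard_cons, Multiset.map_add, Multiset.sum_add,
          Multiset.map_map]
        have hmc : (Multiset.powersetCard 1 s).map (Multiset.prod ∘ Multiset.cons a)
            = (Multiset.powersetCard 1 s).map (fun t => a * t.prod) :=
          Multiset.map_congr rfl (fun t _ => by simp)
        rw [hmc, Multiset.sum_map_mul_left]
        rfl
      rw [Multiset.sum_cons, hcons, esymm_one']
      rw [Multiset.map_cons, Multiset.sum_cons]
      ring_nf
      ring_nf at ih
      linarith

lemma multiset_cauchy_schwarz (m : Multiset ℝ) :
    m.sum ^ 2 ≤ (Multiset.card m : ℝ) * (m.map (fun x => x^2)).sum := by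
  induction m using Multiset.induction_on with
  | empty => simp
  | cons a s ih =>
      rcases eq_or_ne s 0 with rfl | hs
      · simp
      · have hc : 1 ≤ (Multiset.card s : ℝ) := by
          have : 1 ≤ Multiset.card s := by
            rcases Multiset.exists_mem_of_ne_zero hs with ⟨x, hx⟩
            exact Multiset.card_pos.mpr hs
          exact_mod_cast this
        have hP : 0 ≤ (s.map (fun x => x^2)).sum :=
          Multiset.sum_nonneg (fun x hx => by
            rcases Multiset.mem_map.mp hx with ⟨y, -, rfl⟩; positivity)
        rw [Multiset.sum_cons, Multiset.map_cons, Multiset.sum_cons, Multiset.card_cons]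
        push_cast
        nlinarith [sq_nonneg ((Multiset.card s : ℝ) * a - s.sum), ih, hc, hP,
          sq_nonneg (a - s.sum)]


end Stmt13Aux

open Stmt13Aux

theorem stmt13 (n k : ℕ) (hk1 : 1 ≤ k) (hkn : k ≤ n) (lam : Fin n → ℝ)
    (hpos : ∀ i, 0 < lam i) (μ : Fin n → ℝ) :
    ∑ i, ∑ j ∈ Finset.univ.erase i, sigmaE2 n k lam i j * μ i * μ j
      ≤ (((k : ℝ) - 1) / k) * (∑ i, sigmaE1 n (k - 1) lam i * μ i) ^ 2 / sigmaE n k lam := by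
  rcases eq_or_lt_of_le hk1 with hk1' | hk2
  · -- k = 1
    have hL : ∑ i, ∑ j ∈ Finset.univ.erase i, sigmaE2 n k lam i j * μ i * μ j = 0 := by
      refine Finset.sum_eq_zero (fun i _ => Finset.sum_eq_zero (fun j _ => ?_))
      rw [sigmaE2, Finset.filter_false_of_mem, Finset.sum_empty, zero_mul, zero_mul]
      intro t _
      omega
    rw [hL, ← hk1']
    norm_num
  · -- 2 ≤ k
    have hk2 : 2 ≤ k := hk2
    have hσ : 0 < sigmaE n k lam := by
      rw [sigmaE]
      refine Finset.sum_pos (fun S _ => Finset.prod_pos (fun i _ => hpos i)) ?_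
      exact Finset.powersetCard_nonempty.mpr (by simpa using hkn)
    set g : Polynomial ℝ := gpoly n k lam μ with hg
    have hck : g.coeff k = sigmaE n k lam := gpoly_coeff_k lam μ hkn
    have hdegle : g.natDegree ≤ k := by
      rw [hg, gpoly]
      refine natDegree_sum_le_of_forall_le _ _ (fun S hS => ?_)
      refine (natDegree_prod_le _ _).trans ?_
      have : ∀ i ∈ S, (C (μ i) + C (lam i) * X).natDegree ≤ 1 := by
        intro i _
        refine (natDegree_add_le _ _).trans ?_
        simp only [natDegree_C, max_le_iff]
        exact ⟨by omega, (natDegree_C_mul_le _ _).trans (by simp)⟩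
      refine (Finset.sum_le_sum this).trans ?_
      simp [(Finset.mem_powersetCard.mp hS).2]
    have hdeg : g.natDegree = k :=
      le_antisymm hdegle (le_natDegree_of_ne_zero (by rw [hck]; exact hσ.ne'))
    have hg0 : g ≠ 0 := fun h0 => by simp [h0] at hck; exact hσ.ne' hck.symm
    set gC : Polynomial ℂ := g.map (algebraMap ℝ ℂ) with hgC
    have hgC0 : gC ≠ 0 := Polynomial.map_ne_zero hg0
    have hdegC : gC.natDegree = k := by rw [hgC, natDegree_map, hdeg]
    have hsplit : Splits gC := IsAlgClosed.splits gC
    have hcard : Multiset.card gC.roots = k := by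
      rw [splits_iff_card_roots.mp hsplit, hdegC]
    have hev : ∀ w : ℂ, gC.eval w
        = ∑ S ∈ Finset.powersetCard k (Finset.univ : Finset (Fin n)),
            ∏ i ∈ S, ((μ i : ℂ) + (lam i : ℂ) * w) := by
      intro w
      rw [hgC, eval_map, hg, gpoly, eval₂_finset_sum]
      refine Finset.sum_congr rfl (fun S _ => ?_)
      rw [eval₂_finset_prod]
      refine Finset.prod_congr rfl (fun i _ => ?_)
      simp [Complex.coe_algebraMap]
    have him0 : ∀ r ∈ gC.roots, r.im = 0 := by
      have key : ∀ w : ℂ, 0 < w.im → gC.eval w ≠ 0 := by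
        intro w hw
        rw [hev w]
        refine esymm_ne_zero n k hk1 hkn _ (fun i => ?_)
        simp only [Complex.add_im, Complex.ofReal_im, Complex.mul_im, Complex.ofReal_re,
          Complex.ofReal_im, zero_add, zero_mul, sub_zero, add_zero]
        exact mul_pos (hpos i) hw
      intro r hr
      have hr0 : gC.eval r = 0 := (mem_roots hgC0).mp hr
      by_contra him
      rcases lt_or_gt_of_ne him with hlt | hgt
      · -- im < 0 : use conjugate
        have hconj : gC.eval ((starRingEnd ℂ) r) = 0 := by
          have := Polynomial.aeval_conj g r
          rw [aeval_def, aeval_def, ← eval_map, ← eval_map] at this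
          rw [← hgC] at this
          rw [this, hr0, map_zero]
        exact key _ (by simpa [Complex.conj_im] using hlt) hconj
      · exact key r hgt hr0
    -- real roots
    set realm : Multiset ℝ := gC.roots.map Complex.re with hrealm
    have hrcard : (Multiset.card realm : ℝ) = (k : ℝ) := by
      rw [hrealm, Multiset.card_map, hcard]
    have hroots_eq : gC.roots = realm.map (Complex.ofRealHom) := by
      rw [hrealm, Multiset.map_map]
      have hfun : ∀ r ∈ gC.roots, (Complex.ofRealHom ∘ Complex.re) r = id r := fun r hr => by
        simp only [Function.comp_apply, Complex.ofRealHom_eq_coe, id]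
        exact Complex.ext (by simp) (by simp [him0 r hr])
      rw [Multiset.map_congr rfl hfun, Multiset.map_id]
    have hlcC : gC.leadingCoeff = ((sigmaE n k lam : ℝ) : ℂ) := by
      rw [leadingCoeff, hdegC, hgC, coeff_map, hck]
      rfl
    set e1 : ℝ := realm.sum with he1
    set e2 : ℝ := realm.esymm 2 with he2
    set p2 : ℝ := (realm.map (fun x => x^2)).sum with hp2
    have hnewton : e1 ^ 2 = p2 + 2 * e2 := esymm_two_newton realm
    have hCS : e1 ^ 2 ≤ (k : ℝ) * p2 := by
      have := multiset_cauchy_schwarz realm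
      rwa [hrcard] at this
    -- coefficient identities
    have hc1 : g.coeff (k - 1) = -(sigmaE n k lam * e1) := by
      have hv := Polynomial.coeff_eq_esymm_roots_of_splits hsplit
        (k := k - 1) (by omega : k - 1 ≤ gC.natDegree)
      rw [hdegC, hlcC, show k - (k-1) = 1 by omega] at hv
      rw [hroots_eq, esymm_map_hom, esymm_one'] at hv
      have : gC.coeff (k-1) = ((-(sigmaE n k lam * e1) : ℝ) : ℂ) := by
        rw [hv, he1]; simp only [Complex.ofRealHom_eq_coe]; push_cast; ring
      rw [hgC, coeff_map, Complex.coe_algebraMap] at this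
      exact_mod_cast this
    have hc2 : g.coeff (k - 2) = sigmaE n k lam * e2 := by
      have hv := Polynomial.coeff_eq_esymm_roots_of_splits hsplit
        (k := k - 2) (by omega : k - 2 ≤ gC.natDegree)
      rw [hdegC, hlcC, show k - (k-2) = 2 by omega] at hv
      rw [hroots_eq, esymm_map_hom] at hv
      have : gC.coeff (k-2) = ((sigmaE n k lam * e2 : ℝ) : ℂ) := by
        rw [hv, he2]; simp only [Complex.ofRealHom_eq_coe]; push_cast; ring
      rw [hgC, coeff_map, Complex.coe_algebraMap] at this
      exact_mod_cast this
    have hL : ∑ i, ∑ j ∈ Finset.univ.erase i, sigmaE2 n k lam i j * μ i * μ j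
        = 2 * (sigmaE n k lam * e2) := by
      rw [← gpoly_coeff_k2 lam μ hk2, ← hg, hc2]
    have hS1 : ∑ i, sigmaE1 n (k - 1) lam i * μ i = -(sigmaE n k lam * e1) := by
      rw [← gpoly_coeff_k1 lam μ hk1, ← hg, hc1]
    rw [hL, hS1]
    have hk0 : (0:ℝ) < (k:ℝ) := by positivity
    rw [div_mul_eq_mul_div, div_div, le_div_iff₀ (by positivity)]
    have hσ2 : (0:ℝ) ≤ sigmaE n k lam ^ 2 := sq_nonneg _
    have key : 0 ≤ sigmaE n k lam ^ 2 * ((k:ℝ) * p2 - e1 ^ 2) :=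
      mul_nonneg hσ2 (sub_nonneg.mpr hCS)
    have h2e2 : 2 * e2 = e1 ^ 2 - p2 := by linarith [hnewton]
    have h3 : sigmaE n k lam ^ 2 * (k:ℝ) * (2 * e2)
        = sigmaE n k lam ^ 2 * (k:ℝ) * (e1 ^ 2 - p2) := by rw [h2e2]
    nlinarith [key, h3]
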